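/- arXiv:math/0306166 — 2 statements merged into one kernel-verified Lean document; each statement's English description precedes it below -/
import Mathlib

section
/- Let P₁,…,Pₘ be additive graph properties and let P = P₁∘⋯∘Pₘ. (i) For every graph G, every (P₁,…,Pₘ)-partition of G in which all m parts are nonempty is a P-decomposition of G with m parts. (ii) If moreover each Pᵢ is induced-hereditary, then every graph G ∈ P with at least m vertices has a (P₁,…,Pₘ)-partition with all m parts nonempty (hence dec_P(G) ≥ m). -/
/-!  Common framework: finite simple graphs on finite subsets of `ℕ`,
graph properties, `(P₁,…,Pₙ)`-partitions, products of properties,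
`P`-decompositions, strict graphs, decomposability numbers, generating
sets, *-joins of copies, and the respecting notions from the paper. -/

/-- A finite simple graph on a finite vertex set of natural numbers. -/
structure NGraph where
  verts : Finset ℕ
  Adj : ℕ → ℕ → Prop
  symm : ∀ a b, Adj a b → Adj b a
  loopless : ∀ a, ¬Adj a a
  mem_of_adj : ∀ a b, Adj a b → a ∈ verts ∧ b ∈ verts

/-- The null graph `K₀` (no vertices). -/
def nullGraph : NGraph where
  verts := ∅
  Adj _ _ := False
  symm _ _ h := h.elim
  loopless _ h := h
  mem_of_adj _ _ h := h.elim

namespace NGraph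

/-- The subgraph of `G` induced by the vertex set `U`. -/
def induce (G : NGraph) (U : Finset ℕ) : NGraph where
  verts := G.verts ∩ U
  Adj a b := G.Adj a b ∧ a ∈ U ∧ b ∈ U
  symm a b h := ⟨G.symm a b h.1, h.2.2, h.2.1⟩
  loopless a h := G.loopless a h.1
  mem_of_adj a b h := ⟨Finset.mem_inter.2 ⟨(G.mem_of_adj a b h.1).1, h.2.1⟩,
    Finset.mem_inter.2 ⟨(G.mem_of_adj a b h.1).2, h.2.2⟩⟩

/-- `φ` is an isomorphism from `G` onto `H`. -/
def IsoVia (G H : NGraph) (φ : ℕ → ℕ) : Prop :=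
  Set.BijOn φ (G.verts : Set ℕ) (H.verts : Set ℕ) ∧
    ∀ a ∈ G.verts, ∀ b ∈ G.verts, (G.Adj a b ↔ H.Adj (φ a) (φ b))

/-- `G` and `H` are isomorphic. -/
def Iso (G H : NGraph) : Prop := ∃ φ, G.IsoVia H φ

/-- `H ≤ G` : `H` is isomorphic to an induced subgraph of `G`. -/
def Le (H G : NGraph) : Prop := ∃ U ⊆ G.verts, H.Iso (G.induce U)

end NGraph

/-- `K` is the disjoint union of the family `C` of graphs. -/
def IsDisjUnion {k : ℕ} (K : NGraph) (C : Fin k → NGraph) : Prop :=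
  (∀ i j, i ≠ j → Disjoint (C i).verts (C j).verts) ∧
  K.verts = Finset.univ.biUnion (fun j => (C j).verts) ∧
  ∀ a b, K.Adj a b ↔ ∃ j, (C j).Adj a b

/-- `kG₀` : the set of graphs that are disjoint unions of `k` copies of `G₀`. -/
def kCopies (k : ℕ) (G₀ : NGraph) : Set NGraph :=
  {K | ∃ C : Fin k → NGraph, (∀ j, (C j).Iso G₀) ∧ IsDisjUnion K C}

/-- The *-join `G₁ * ⋯ * Gₙ` of a family of graphs (with pairwise disjoint
vertex sets): all graphs on the union of the vertex sets inducing each `Gᵢ`,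
so that only edges joining distinct `Gᵢ`'s may be added. -/
def StarJoin {n : ℕ} (Gs : Fin n → NGraph) : Set NGraph :=
  {H | H.verts = Finset.univ.biUnion (fun i => (Gs i).verts) ∧
    ∀ i, ∀ a ∈ (Gs i).verts, ∀ b ∈ (Gs i).verts, (H.Adj a b ↔ (Gs i).Adj a b)}

/-- `G * K₁` : the graphs obtained from `G` by adding one new vertex joined
arbitrarily to `G`. -/
def joinOne (G : NGraph) : Set NGraph :=
  {H | ∃ v, v ∉ G.verts ∧ H.verts = insert v G.verts ∧
    ∀ a ∈ G.verts, ∀ b ∈ G.verts, (H.Adj a b ↔ G.Adj a b)}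

/-- A graph property: a nonempty isomorphism-closed class of graphs (it
contains the null graph, which by convention belongs to every property, and
some graph with at least one vertex). -/
def IsProperty (P : Set NGraph) : Prop :=
  nullGraph ∈ P ∧ (∃ G ∈ P, G.verts.Nonempty) ∧
    ∀ G H, NGraph.Iso G H → G ∈ P → H ∈ P

/-- `P` is induced-hereditary. -/
def IndHer (P : Set NGraph) : Prop := ∀ G H, G ∈ P → NGraph.Le H G → H ∈ P

/-- `P` is additive: closed under disjoint unions. -/
def Additive' (P : Set NGraph) : Prop :=
  ∀ G H K : NGraph, G ∈ P → H ∈ P → IsDisjUnion K ![G, H] → K ∈ P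

/-- An additive induced-hereditary graph property. -/
def IsAIH (P : Set NGraph) : Prop := IsProperty P ∧ IndHer P ∧ Additive' P

/-- A `(P₁,…,Pₙ)`-partition of `G` (parts may be empty). -/
def IsPartitionInto {n : ℕ} (Ps : Fin n → Set NGraph) (G : NGraph)
    (V : Fin n → Finset ℕ) : Prop :=
  (∀ i j, i ≠ j → Disjoint (V i) (V j)) ∧
  Finset.univ.biUnion V = G.verts ∧
  ∀ i, G.induce (V i) ∈ Ps i

/-- The product `P₁ ∘ ⋯ ∘ Pₙ` of properties. -/
def ProdProp {n : ℕ} (Ps : Fin n → Set NGraph) : Set NGraph :=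
  {G | ∃ V : Fin n → Finset ℕ, IsPartitionInto Ps G V}

/-- A `P`-decomposition of `G` with parts `V` : the parts are nonempty and
partition `V(G)`, and for every `k ≥ 1` every graph in
`kG[V₁] * ⋯ * kG[Vₙ]` belongs to `P`. -/
def IsDecomp (P : Set NGraph) (G : NGraph) {n : ℕ} (V : Fin n → Finset ℕ) : Prop :=
  (∀ i, (V i).Nonempty) ∧
  (∀ i j, i ≠ j → Disjoint (V i) (V j)) ∧
  Finset.univ.biUnion V = G.verts ∧
  ∀ k : ℕ, 0 < k → ∀ A : Fin n → NGraph,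
    (∀ i, A i ∈ kCopies k (G.induce (V i))) →
    (∀ i j, i ≠ j → Disjoint (A i).verts (A j).verts) →
    ∀ H ∈ StarJoin A, H ∈ P

/-- `dec_P(G)` : the maximum number of parts of a `P`-decomposition of `G`
(`0` if there is none). -/
noncomputable def decP (P : Set NGraph) (G : NGraph) : ℕ :=
  sSup {n | ∃ V : Fin n → Finset ℕ, IsDecomp P G V}

/-- `G` is `P`-strict : `G ∈ P` but some graph in `G * K₁` is not in `P`. -/
def Strict (P : Set NGraph) (G : NGraph) : Prop :=
  G ∈ P ∧ ∃ H ∈ joinOne G, H ∉ P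

/-- `dec(P) = min { dec_P(G) : G ∈ S(P) }`. -/
noncomputable def decOf (P : Set NGraph) : ℕ :=
  sInf (decP P '' {G | Strict P G})

/-- `dec_P(𝒢) = min { dec_P(G) : G ∈ 𝒢 }`. -/
noncomputable def decSet (P 𝒢 : Set NGraph) : ℕ := sInf (decP P '' 𝒢)

/-- `⟨𝒢⟩` : the induced-hereditary property generated by `𝒢`. -/
def gen (𝒢 : Set NGraph) : Set NGraph := {G | ∃ H ∈ 𝒢, NGraph.Le G H}

/-- `𝒢` is a generating set for `P`. -/
def Generates (𝒢 P : Set NGraph) : Prop := gen 𝒢 = P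

/-- `G` is uniquely `P`-decomposable: it has exactly one `P`-decomposition
(as an unordered partition) with `dec_P(G)` parts. -/
def UniquelyDecomposable (P : Set NGraph) (G : NGraph) : Prop :=
  (∃ V : Fin (decP P G) → Finset ℕ, IsDecomp P G V) ∧
  ∀ V W : Fin (decP P G) → Finset ℕ, IsDecomp P G V → IsDecomp P G W →
    ∃ σ : Equiv.Perm (Fin (decP P G)), ∀ i, W i = V (σ i)

/-- Data exhibiting `Gstar` as a member of `s ⊛ G` : `s` pairwise disjoint
copies of `G` (given by isomorphisms) whose *-join contains `Gstar`. -/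
structure CopyJoin (G : NGraph) (s : ℕ) (Gstar : NGraph) where
  copies : Fin s → NGraph
  maps : Fin s → ℕ → ℕ
  iso : ∀ k, G.IsoVia (copies k) (maps k)
  disj : ∀ k l, k ≠ l → Disjoint (copies k).verts (copies l).verts
  mem : Gstar ∈ StarJoin copies

/-- `Gstar ∈ s ⊛ G` respects `d₀ = (U₁,…,Uₘ)` : every added edge between two
different copies of `G` meets (copies of) two different `Uⱼ`'s, i.e. there is
no edge between the copies of the same `Uⱼ` in two different copies of `G`. -/
def CopyJoin.RespectsJoin {G : NGraph} {s : ℕ} {Gstar : NGraph}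
    (cj : CopyJoin G s Gstar) {m : ℕ} (U : Fin m → Finset ℕ) : Prop :=
  ∀ k l : Fin s, k ≠ l → ∀ j : Fin m, ∀ a ∈ (U j).image (cj.maps k),
    ∀ b ∈ (U j).image (cj.maps l), ¬Gstar.Adj a b

/-- A partition `V` of `Gstar ∈ s ⊛ G` respects `d₀ = (U₁,…,Uₘ)` uniformly:
for each part `Vᵢ` there is a single `Uⱼ` such that in every copy `Gᵏ`,
`Vᵢ ∩ V(Gᵏ)` is contained in the copy of `Uⱼ`. -/
def CopyJoin.RespectsUniformly {G : NGraph} {s : ℕ} {Gstar : NGraph}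
    (cj : CopyJoin G s Gstar) {n m : ℕ}
    (V : Fin n → Finset ℕ) (U : Fin m → Finset ℕ) : Prop :=
  ∀ i, ∃ j, ∀ k, V i ∩ (cj.copies k).verts ⊆ (U j).image (cj.maps k)

/-- An irreducible additive induced-hereditary property: one that is not the
product of two additive induced-hereditary properties. -/
def IrredProp (P : Set NGraph) : Prop :=
  IsAIH P ∧ ¬∃ Q R : Set NGraph, IsAIH Q ∧ IsAIH R ∧ P = ProdProp ![Q, R]


section Helpers

open Finset

lemma iso_of_eqOn (G H : NGraph) (hv : G.verts = H.verts)
    (ha : ∀ a ∈ G.verts, ∀ b ∈ G.verts, (G.Adj a b ↔ H.Adj a b)) : G.Iso H := by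
  refine ⟨id, ?_, ha⟩
  rw [hv]
  exact Set.bijOn_id _

lemma iso_symm {G H : NGraph} (h : G.Iso H) : H.Iso G := by
  obtain ⟨φ, hbij, hadj⟩ := h
  have hinv := hbij.invOn_invFunOn
  refine ⟨Function.invFunOn φ G.verts, hbij.symm hinv.symm, ?_⟩
  intro a ha b hb
  have ha' : Function.invFunOn φ G.verts a ∈ G.verts := (hbij.symm hinv.symm).mapsTo ha
  have hb' : Function.invFunOn φ G.verts b ∈ G.verts := (hbij.symm hinv.symm).mapsTo hb
  have h1 := hadj _ ha' _ hb'
  rw [hinv.2 ha, hinv.2 hb] at h1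
  exact h1.symm

/-- The disjoint union of a family of graphs. -/
def unionGraph {k : ℕ} (C : Fin k → NGraph) : NGraph where
  verts := Finset.univ.biUnion fun j => (C j).verts
  Adj a b := ∃ j, (C j).Adj a b
  symm a b := fun ⟨j, h⟩ => ⟨j, (C j).symm a b h⟩
  loopless a := fun ⟨j, h⟩ => (C j).loopless a h
  mem_of_adj a b := fun ⟨j, h⟩ =>
    ⟨Finset.mem_biUnion.2 ⟨j, Finset.mem_univ _, ((C j).mem_of_adj a b h).1⟩,
     Finset.mem_biUnion.2 ⟨j, Finset.mem_univ _, ((C j).mem_of_adj a b h).2⟩⟩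

lemma unionGraph_mem (P : Set NGraph) (hP : IsProperty P) (hA : Additive' P) :
    ∀ (k : ℕ) (C : Fin k → NGraph),
      (∀ i j, i ≠ j → Disjoint (C i).verts (C j).verts) →
      (∀ j, C j ∈ P) → unionGraph C ∈ P := by
  intro k
  induction k with
  | zero =>
    intro C _ _
    apply hP.2.2 nullGraph _ _ hP.1
    refine ⟨id, ?_, ?_⟩
    · have h1 : (nullGraph.verts : Set ℕ) = ∅ := by simp [nullGraph]
      have h2 : ((unionGraph C).verts : Set ℕ) = ∅ := by
        simp [unionGraph]
      rw [h1, h2]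
      exact Set.bijOn_empty _
    · intro a ha
      simp [nullGraph] at ha
  | succ k ih =>
    intro C hdisj hmem
    have h1 : unionGraph (fun j : Fin k => C j.succ) ∈ P :=
      ih _ (fun i j hij => hdisj i.succ j.succ (fun h => hij (Fin.succ_injective _ h)))
        (fun j => hmem _)
    apply hA (C 0) (unionGraph fun j : Fin k => C j.succ) _ (hmem 0) h1
    refine ⟨?_, ?_, ?_⟩
    · intro i j hij
      fin_cases i <;> fin_cases j <;> simp_all
      · exact Finset.disjoint_biUnion_right _ _ _ |>.2
          (fun j _ => hdisj 0 j.succ (Fin.succ_ne_zero j).symm)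
      · exact (Finset.disjoint_biUnion_right _ _ _ |>.2
          (fun j _ => hdisj 0 j.succ (Fin.succ_ne_zero j).symm)).symm
    · ext a
      simp only [unionGraph, Finset.mem_biUnion, Finset.mem_univ, true_and]
      rw [Fin.exists_fin_succ, Fin.exists_fin_two]
      simp [Finset.mem_biUnion]
    · intro a b
      show (∃ j : Fin (k+1), (C j).Adj a b) ↔ _
      rw [Fin.exists_fin_succ, Fin.exists_fin_two]
      show _ ↔ (C 0).Adj a b ∨ (∃ j : Fin k, (C j.succ).Adj a b)
      rfl

lemma mem_of_isDisjUnion (P : Set NGraph) (hP : IsProperty P) (hA : Additive' P)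
    {k : ℕ} {K : NGraph} {C : Fin k → NGraph} (h : IsDisjUnion K C)
    (hm : ∀ j, C j ∈ P) : K ∈ P := by
  apply hP.2.2 _ _ _ (unionGraph_mem P hP hA k C h.1 hm)
  apply iso_of_eqOn
  · exact h.2.1.symm
  · intro a _ b _
    exact (h.2.2 a b).symm

lemma induce_le (G : NGraph) {S T : Finset ℕ} (hST : S ⊆ T) :
    (G.induce S).Le (G.induce T) := by
  refine ⟨G.verts ∩ S, ?_, ?_⟩
  · intro x hx
    simp only [NGraph.induce, Finset.mem_inter] at *
    exact ⟨hx.1, hST hx.2⟩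
  · apply iso_of_eqOn
    · show G.verts ∩ S = (G.verts ∩ T) ∩ (G.verts ∩ S)
      ext a
      simp only [Finset.mem_inter]
      constructor
      · intro h; exact ⟨⟨h.1, hST h.2⟩, h⟩
      · intro h; exact h.2
    · intro a ha b hb
      simp only [NGraph.induce, Finset.mem_inter] at ha hb ⊢
      constructor
      · rintro ⟨hadj, haS, hbS⟩
        exact ⟨⟨hadj, hST haS, hST hbS⟩, ⟨ha.1, haS⟩, ⟨hb.1, hbS⟩⟩
      · rintro ⟨⟨hadj, _, _⟩, ⟨_, haS⟩, ⟨_, hbS⟩⟩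
        exact ⟨hadj, haS, hbS⟩

lemma single_mem (P : Set NGraph) (hP : IsProperty P) (hH : IndHer P)
    (G : NGraph) (v : ℕ) (hv : v ∈ G.verts) : G.induce {v} ∈ P := by
  obtain ⟨G₀, hG₀, w, hw⟩ := hP.2.1
  have h1 : G₀.induce {w} ∈ P := by
    apply hH G₀ _ hG₀
    refine ⟨{w}, by simpa using hw, iso_of_eqOn _ _ rfl (fun _ _ _ _ => Iff.rfl)⟩
  apply hP.2.2 _ _ _ h1
  have hverts0 : (G₀.induce {w}).verts = {w} := by
    show G₀.verts ∩ {w} = {w}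
    simp [Finset.inter_eq_right, hw]
  have hverts1 : (G.induce {v}).verts = {v} := by
    show G.verts ∩ {v} = {v}
    simp [Finset.inter_eq_right, hv]
  refine ⟨fun _ => v, ?_, ?_⟩
  · rw [hverts0, hverts1]
    refine ⟨fun x _ => by simp, ?_, ?_⟩
    · intro x hx y hy _
      simp only [Finset.coe_singleton, Set.mem_singleton_iff] at hx hy
      rw [hx, hy]
    · intro y hy
      simp only [Finset.coe_singleton, Set.mem_singleton_iff] at hy
      subst hy
      simp
  · intro a ha b hb
    rw [hverts0] at ha hb
    simp only [Finset.mem_singleton] at ha hb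
    rw [ha, hb]
    constructor
    · intro h; exact absurd h ((G₀.induce {w}).loopless _)
    · intro h; exact absurd h ((G.induce {v}).loopless _)

lemma isDecomp_card_le {P : Set NGraph} {G : NGraph} {n : ℕ} {V : Fin n → Finset ℕ}
    (h : IsDecomp P G V) : n ≤ G.verts.card := by
  calc n = ∑ _i : Fin n, 1 := by simp
    _ ≤ ∑ i : Fin n, (V i).card :=
        Finset.sum_le_sum fun i _ => Finset.card_pos.2 (h.1 i)
    _ = (Finset.univ.biUnion V).card :=
        (Finset.card_biUnion fun i _ j _ hij => h.2.1 i j hij).symm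
    _ = G.verts.card := by rw [h.2.2.1]

lemma statement0_part1 (m : ℕ) (Ps : Fin m → Set NGraph)
    (hprop : ∀ i, IsProperty (Ps i)) (hadd : ∀ i, Additive' (Ps i))
    (G : NGraph) (V : Fin m → Finset ℕ)
    (hpart : IsPartitionInto Ps G V) (hne : ∀ i, (V i).Nonempty) :
    IsDecomp (ProdProp Ps) G V := by
  obtain ⟨hVdisj, hVunion, hVmem⟩ := hpart
  refine ⟨hne, hVdisj, hVunion, ?_⟩
  intro k _hk A hA hAdisj H hH
  refine ⟨fun i => (A i).verts, hAdisj, hH.1.symm, ?_⟩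
  intro i
  obtain ⟨C, hCiso, hCdu⟩ := hA i
  have hCmem : ∀ j, C j ∈ Ps i := fun j =>
    (hprop i).2.2 _ _ (iso_symm (hCiso j)) (hVmem i)
  have hAi : A i ∈ Ps i := mem_of_isDisjUnion _ (hprop i) (hadd i) hCdu hCmem
  apply (hprop i).2.2 (A i) _ _ hAi
  apply iso_of_eqOn
  · show (A i).verts = H.verts ∩ (A i).verts
    have hsub : (A i).verts ⊆ H.verts := by
      rw [hH.1]
      intro x hx
      exact Finset.mem_biUnion.2 ⟨i, Finset.mem_univ _, hx⟩
    exact (Finset.inter_eq_right.2 hsub).symm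
  · intro a ha b hb
    constructor
    · intro hadj
      exact ⟨(hH.2 i a ha b hb).2 hadj, ha, hb⟩
    · rintro ⟨hadj, _, _⟩
      exact (hH.2 i a ha b hb).1 hadj

lemma statement0_improve (m : ℕ) (Ps : Fin m → Set NGraph)
    (hprop : ∀ i, IsProperty (Ps i)) (hher : ∀ i, IndHer (Ps i))
    (G : NGraph) (hm : m ≤ G.verts.card) :
    ∀ (t : ℕ) (V : Fin m → Finset ℕ), IsPartitionInto Ps G V →
      ((Finset.univ.filter fun i => V i = ∅).card ≤ t) →
      ∃ V', IsPartitionInto Ps G V' ∧ ∀ i, (V' i).Nonempty := by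
  intro t
  induction t with
  | zero =>
    intro V hV hcard
    refine ⟨V, hV, fun i => ?_⟩
    rw [Finset.nonempty_iff_ne_empty]
    intro hemp
    have hmem : i ∈ Finset.univ.filter fun i => V i = ∅ := by simp [hemp]
    have : (Finset.univ.filter fun i => V i = ∅) = ∅ :=
      Finset.card_eq_zero.1 (Nat.le_zero.1 hcard)
    rw [this] at hmem
    exact absurd hmem (Finset.notMem_empty _)
  | succ t ih =>
    intro V hV hcard
    by_cases hall : ∀ i, (V i).Nonempty
    · exact ⟨V, hV, hall⟩
    push_neg at hall
    obtain ⟨i₀, hi₀⟩ := hall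
    have hi₀e : V i₀ = ∅ := hi₀
    obtain ⟨hVdisj, hVunion, hVmem⟩ := hV
    have hsum : ∑ i, (V i).card = G.verts.card := by
      rw [← hVunion, Finset.card_biUnion (fun i _ j _ hij => hVdisj i j hij)]
    have hex : ∃ j, 2 ≤ (V j).card := by
      by_contra hno
      push_neg at hno
      have h1 : ∀ i, (V i).card ≤ 1 := fun i => Nat.lt_succ_iff.mp (hno i)
      have h2 : ∑ i ∈ Finset.univ.filter (fun i => V i ≠ ∅), (V i).card
          = ∑ i, (V i).card := by
        apply Finset.sum_filter_of_ne
        intro x _ hx h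
        rw [h] at hx
        simp at hx
      have h3 : ∑ i ∈ Finset.univ.filter (fun i => V i ≠ ∅), (V i).card
          ≤ (Finset.univ.filter (fun i => V i ≠ ∅)).card * 1 := by
        apply Finset.sum_le_card_nsmul
        intro x _
        exact h1 x
      have h4 : (Finset.univ.filter (fun i : Fin m => V i ≠ ∅)).card < m := by
        have hss : (Finset.univ.filter (fun i : Fin m => V i ≠ ∅)) ⊂ Finset.univ := by
          refine Finset.ssubset_iff_of_subset (Finset.filter_subset _ _) |>.2 ?_
          exact ⟨i₀, Finset.mem_univ _, by simp [hi₀e]⟩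
        have := Finset.card_lt_card hss
        simpa using this
      omega
    obtain ⟨j, hj2⟩ := hex
    obtain ⟨v, hv⟩ := Finset.card_pos.1 (by omega : 0 < (V j).card)
    have hji₀ : j ≠ i₀ := by
      intro h
      rw [h, hi₀e] at hj2
      simp at hj2
    have hvG : v ∈ G.verts := by
      rw [← hVunion]
      exact Finset.mem_biUnion.2 ⟨j, Finset.mem_univ _, hv⟩
    set V' : Fin m → Finset ℕ :=
      fun i => if i = i₀ then {v} else if i = j then V j \ {v} else V i with hV'def
    have hV'i₀ : V' i₀ = {v} := by simp [hV'def]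
    have hV'j : V' j = V j \ {v} := by simp [hV'def, hji₀]
    have hsub : ∀ i, i ≠ i₀ → V' i ⊆ V i := by
      intro i h
      simp only [hV'def, if_neg h]
      split
      · next h2 => subst h2; exact Finset.sdiff_subset
      · exact subset_rfl
    have hvd : ∀ i, i ≠ j → Disjoint ({v} : Finset ℕ) (V i) := by
      intro i h
      refine Finset.disjoint_singleton_left.2 ?_
      exact Finset.disjoint_left.1 (hVdisj j i (fun h' => h h'.symm)) hv
    have hpart' : IsPartitionInto Ps G V' := by
      refine ⟨?_, ?_, ?_⟩
      · intro a b hab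
        by_cases ha : a = i₀ <;> by_cases hb : b = i₀
        · exact absurd (ha.trans hb.symm) hab
        · subst ha
          rw [hV'i₀]
          by_cases hbj : b = j
          · subst hbj
            rw [hV'j]
            simp
          · exact Finset.disjoint_of_subset_right (hsub b hb) (hvd b hbj)
        · subst hb
          rw [hV'i₀]
          by_cases haj : a = j
          · subst haj
            rw [hV'j]
            simp
          · exact (Finset.disjoint_of_subset_right (hsub a ha) (hvd a haj)).symm
        · exact Finset.disjoint_of_subset_left (hsub a ha)
            (Finset.disjoint_of_subset_right (hsub b hb) (hVdisj a b hab))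
      · have hunion' : Finset.univ.biUnion V' = Finset.univ.biUnion V := by
          ext a
          simp only [Finset.mem_biUnion, Finset.mem_univ, true_and]
          constructor
          · rintro ⟨i, hi⟩
            by_cases h1 : i = i₀
            · rw [h1, hV'i₀] at hi
              simp only [Finset.mem_singleton] at hi
              rw [hi]
              exact ⟨j, hv⟩
            · exact ⟨i, hsub i h1 hi⟩
          · rintro ⟨i, hi⟩
            by_cases h1 : i = i₀
            · rw [h1, hi₀e] at hi
              exact absurd hi (Finset.notMem_empty _)
            by_cases h2 : i = j
            · rw [h2] at hi
              by_cases h3 : a = v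
              · exact ⟨i₀, by simp [hV'i₀, h3]⟩
              · exact ⟨j, by simp [hV'j, hi, h3]⟩
            · refine ⟨i, ?_⟩
              simp only [hV'def, if_neg h1, if_neg h2]
              exact hi
        rw [hunion', hVunion]
      · intro i
        by_cases h1 : i = i₀
        · rw [h1, hV'i₀]
          exact single_mem _ (hprop i₀) (hher i₀) G v hvG
        · exact hher i _ _ (hVmem i) (induce_le G (hsub i h1))
    apply ih V' hpart'
    have hmem₀ : i₀ ∈ Finset.univ.filter fun i => V i = ∅ := by simp [hi₀e]
    have hss : (Finset.univ.filter fun i => V' i = ∅)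
        ⊆ (Finset.univ.filter fun i => V i = ∅).erase i₀ := by
      intro x hx
      simp only [Finset.mem_filter, Finset.mem_univ, true_and] at hx
      rw [Finset.mem_erase]
      constructor
      · intro h
        rw [h, hV'i₀] at hx
        exact absurd hx (Finset.singleton_ne_empty v)
      · simp only [Finset.mem_filter, Finset.mem_univ, true_and]
        by_cases h2 : x = j
        · rw [h2, hV'j] at hx
          exfalso
          have : (V j).card ≤ 1 := by
            have := Finset.card_sdiff_add_card_eq_card
              (Finset.singleton_subset_iff.2 hv)
            rw [hx] at this
            simp at this
            omega
          omega
        · by_cases h1 : x = i₀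
          · rw [h1]; exact hi₀e
          · rw [show V' x = V x from by simp [hV'def, h1, h2]] at hx
            exact hx
    calc (Finset.univ.filter fun i => V' i = ∅).card
        ≤ ((Finset.univ.filter fun i => V i = ∅).erase i₀).card :=
          Finset.card_le_card hss
      _ = (Finset.univ.filter fun i => V i = ∅).card - 1 :=
          Finset.card_erase_of_mem hmem₀
      _ ≤ t := by
          have h1 : 1 ≤ (Finset.univ.filter fun i => V i = ∅).card :=
            Finset.card_pos.2 ⟨i₀, hmem₀⟩
          omega

end Helpers

-- STATEMENT 0
theorem statement0 (m : ℕ) (Ps : Fin m → Set NGraph)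
    (hprop : ∀ i, IsProperty (Ps i)) (hadd : ∀ i, Additive' (Ps i)) :
    (∀ (G : NGraph) (V : Fin m → Finset ℕ),
      IsPartitionInto Ps G V → (∀ i, (V i).Nonempty) → IsDecomp (ProdProp Ps) G V) ∧
    ((∀ i, IndHer (Ps i)) →
      ∀ G ∈ ProdProp Ps, m ≤ G.verts.card →
        (∃ V : Fin m → Finset ℕ, IsPartitionInto Ps G V ∧ ∀ i, (V i).Nonempty) ∧
        m ≤ decP (ProdProp Ps) G) := by
  constructor
  · intro G V hpart hne
    exact statement0_part1 m Ps hprop hadd G V hpart hne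
  · intro hher G hG hm
    obtain ⟨V, hV⟩ := hG
    obtain ⟨V', hV', hne'⟩ := statement0_improve m Ps hprop hher G hm
      ((Finset.univ.filter fun i => V i = ∅).card) V hV le_rfl
    refine ⟨⟨V', hV', hne'⟩, ?_⟩
    have hdec : IsDecomp (ProdProp Ps) G V' :=
      statement0_part1 m Ps hprop hadd G V' hV' hne'
    apply le_csSup
    · exact ⟨G.verts.card, by rintro n ⟨W, hW⟩; exact isDecomp_card_le hW⟩
    · exact ⟨V', hdec⟩
end

section
/- Let P be an additive induced-hereditary graph property that is not the class of all graphs, write n := dec(P), and let G, H ∈ S⇓(P) with G an induced subgraph of H (V(G) ⊆ V(H)). If (G₁,…,Gₙ) and (H₁,…,Hₙ) are the ind-parts of G and H respectively, then the Hᵢ can be relabelled so that V(Hᵢ) ∩ V(G) = V(Gᵢ) for every i; in particular each ind-part of G is an induced subgraph of a distinct ind-part of H. -/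
/-! ### Auxiliary machinery -/

section Aux

open Finset

/-- A strict upper bound for a finite set of naturals. -/
def bnd (s : Finset ℕ) : ℕ := s.sup id + 1

lemma lt_bnd {s : Finset ℕ} {a : ℕ} (h : a ∈ s) : a < bnd s :=
  Nat.lt_succ_of_le (Finset.le_sup (f := id) h)

/-- Image of a graph under a map. -/
def NGraph.mapGraph (B : NGraph) (f : ℕ → ℕ) : NGraph where
  verts := B.verts.image f
  Adj a b := ∃ x y, B.Adj x y ∧ a = f x ∧ b = f y ∧ a ≠ b
  symm a b := by
    rintro ⟨x, y, h, rfl, rfl, hne⟩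
    exact ⟨y, x, B.symm _ _ h, rfl, rfl, hne.symm⟩
  loopless a := by rintro ⟨x, y, h, rfl, e, hne⟩; exact hne rfl
  mem_of_adj a b := by
    rintro ⟨x, y, h, rfl, rfl, -⟩
    obtain ⟨hx, hy⟩ := B.mem_of_adj _ _ h
    exact ⟨Finset.mem_image_of_mem f hx, Finset.mem_image_of_mem f hy⟩

lemma NGraph.adj_ne {B : NGraph} {a b : ℕ} (h : B.Adj a b) : a ≠ b := by
  rintro rfl; exact B.loopless a h

lemma NGraph.mapGraph_isoVia (B : NGraph) (f : ℕ → ℕ)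
    (hf : Set.InjOn f (B.verts : Set ℕ)) : B.IsoVia (B.mapGraph f) f := by
  constructor
  · have : ((B.mapGraph f).verts : Set ℕ) = f '' (B.verts : Set ℕ) := by
      simp [NGraph.mapGraph]
    rw [this]
    exact hf.bijOn_image
  · intro a ha b hb
    constructor
    · intro h
      exact ⟨a, b, h, rfl, rfl, fun e => B.adj_ne h (hf ha hb e)⟩
    · rintro ⟨x, y, h, ex, ey, -⟩
      obtain ⟨hx, hy⟩ := B.mem_of_adj _ _ h
      rwa [hf ha hx ex, hf hb hy ey]

lemma NGraph.IsoVia.isoSymm {G H : NGraph} {φ : ℕ → ℕ} (h : G.IsoVia H φ) :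
    H.Iso G := by
  obtain ⟨hbij, hadj⟩ := h
  refine ⟨Function.invFunOn φ (G.verts : Set ℕ), hbij.symm hbij.invOn_invFunOn.symm, ?_⟩
  intro a ha b hb
  have hia : Function.invFunOn φ (G.verts : Set ℕ) a ∈ (G.verts : Set ℕ) :=
    (hbij.symm hbij.invOn_invFunOn.symm).mapsTo ha
  have hib : Function.invFunOn φ (G.verts : Set ℕ) b ∈ (G.verts : Set ℕ) :=
    (hbij.symm hbij.invOn_invFunOn.symm).mapsTo hb
  have ea : φ (Function.invFunOn φ (G.verts : Set ℕ) a) = a :=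
    hbij.invOn_invFunOn.2 ha
  have eb : φ (Function.invFunOn φ (G.verts : Set ℕ) b) = b :=
    hbij.invOn_invFunOn.2 hb
  have := hadj _ hia _ hib
  rw [ea, eb] at this
  exact this.symm

/-- Disjoint union of a family of graphs. -/
def unionFam {k : ℕ} (C : Fin k → NGraph) : NGraph where
  verts := Finset.univ.biUnion fun j => (C j).verts
  Adj a b := ∃ j, (C j).Adj a b
  symm a b := by rintro ⟨j, h⟩; exact ⟨j, (C j).symm _ _ h⟩
  loopless a := by rintro ⟨j, h⟩; exact (C j).loopless a h
  mem_of_adj a b := by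
    rintro ⟨j, h⟩
    obtain ⟨ha, hb⟩ := (C j).mem_of_adj _ _ h
    exact ⟨Finset.mem_biUnion.2 ⟨j, Finset.mem_univ _, ha⟩,
      Finset.mem_biUnion.2 ⟨j, Finset.mem_univ _, hb⟩⟩

lemma unionFam_mem_kCopies {k : ℕ} {C : Fin k → NGraph} {B : NGraph}
    (hiso : ∀ j, (C j).Iso B)
    (hdisj : ∀ i j, i ≠ j → Disjoint (C i).verts (C j).verts) :
    unionFam C ∈ kCopies k B :=
  ⟨C, hiso, hdisj, rfl, fun _ _ => Iff.rfl⟩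

lemma induce_verts_of_subset {G : NGraph} {U : Finset ℕ} (h : U ⊆ G.verts) :
    (G.induce U).verts = U := by
  simp [NGraph.induce, Finset.inter_eq_right.mpr h]

end Aux
section Trace

open Finset

lemma trace_nonempty (P : Set NGraph) (hP : IsAIH P)
    (G H : NGraph) (hGstrict : Strict P G)
    (hsub : G.verts ⊆ H.verts)
    (hind : ∀ a ∈ G.verts, ∀ b ∈ G.verts, (H.Adj a b ↔ G.Adj a b))
    {n : ℕ} (W : Fin n → Finset ℕ) (hW : IsDecomp P H W)
    (i₀ : Fin n) : (W i₀ ∩ G.verts).Nonempty := by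
  rw [Finset.nonempty_iff_ne_empty]
  intro hcon
  have hcon' : ∀ b ∈ G.verts, b ∉ W i₀ := by
    intro b hb hbW
    have : b ∈ W i₀ ∩ G.verts := Finset.mem_inter.2 ⟨hbW, hb⟩
    simp [hcon] at this
  obtain ⟨hGP, Gs, hGsJ, hGsN⟩ := hGstrict
  obtain ⟨v, hv, hGsverts, hGsadj⟩ := hGsJ
  obtain ⟨hWne, hWdisj, hWunion, hWmain⟩ := hW
  have hWsub : ∀ i, W i ⊆ H.verts := fun i x hx =>
    hWunion ▸ Finset.mem_biUnion.2 ⟨i, Finset.mem_univ _, hx⟩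
  set N := bnd H.verts with hN
  have hHlt : ∀ a ∈ H.verts, a < N := fun a ha => lt_bnd ha
  -- the two copies of each H[W i]
  set C : Fin n → Fin 2 → NGraph :=
    (fun i k => (H.induce (W i)).mapGraph (· + N * k.val)) with hC
  have hbase : ∀ i, (H.induce (W i)).verts = W i := fun i =>
    induce_verts_of_subset (hWsub i)
  have hmemC : ∀ i k a, a ∈ (C i k).verts ↔ ∃ x ∈ W i, x + N * k.val = a := by
    intro i k a
    simp [hC, NGraph.mapGraph, hbase i, Finset.mem_image]
  have hisoC : ∀ i k, (H.induce (W i)).IsoVia (C i k) (· + N * k.val) := by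
    intro i k
    exact NGraph.mapGraph_isoVia _ _ (fun x _ y _ e => by omega)
  -- disjointness of all copies
  have hCdisj : ∀ i k i' k', (i ≠ i' ∨ k ≠ k') →
      Disjoint (C i k).verts (C i' k').verts := by
    intro i k i' k' hne
    rw [Finset.disjoint_left]
    intro a ha ha'
    obtain ⟨x, hx, hxe⟩ := (hmemC i k a).1 ha
    obtain ⟨y, hy, hye⟩ := (hmemC i' k' a).1 ha'
    have hxN : x < N := hHlt x (hWsub i hx)
    have hyN : y < N := hHlt y (hWsub i' hy)
    have hkk : k.val = k'.val := by
      rcases (show k.val = 0 ∨ k.val = 1 by omega) with h | h <;>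
        rcases (show k'.val = 0 ∨ k'.val = 1 by omega) with h' | h' <;>
          rw [h] at hxe ⊢ <;> rw [h'] at hye ⊢ <;> omega
    have hxy : x = y := by rw [hkk] at hxe; omega
    subst hxy
    rcases hne with hi | hk
    · exact (Finset.disjoint_left.1 (hWdisj i i' hi) hx) hy
    · exact hk (Fin.ext hkk)
  set A : Fin n → NGraph := (fun i => unionFam (C i)) with hA
  have hmemA : ∀ i a, a ∈ (A i).verts ↔ ∃ k, a ∈ (C i k).verts := by
    intro i a; simp [hA, unionFam]
  have hAdisj : ∀ i j, i ≠ j → Disjoint (A i).verts (A j).verts := by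
    intro i j hij
    rw [Finset.disjoint_left]
    intro a ha ha'
    obtain ⟨k, hk⟩ := (hmemA i a).1 ha
    obtain ⟨k', hk'⟩ := (hmemA j a).1 ha'
    exact Finset.disjoint_left.1 (hCdisj i k j k' (Or.inl hij)) hk hk'
  have hAcopies : ∀ i, A i ∈ kCopies 2 (H.induce (W i)) :=
    fun i => unionFam_mem_kCopies (fun k => (hisoC i k).isoSymm)
      (fun k k' hkk => hCdisj i k i k' (Or.inr hkk))
  -- small vertices of A i are exactly W i
  have hsmallA : ∀ i a, a ∈ (A i).verts → a < N → a ∈ W i := by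
    intro i a ha haN
    obtain ⟨k, hk⟩ := (hmemA i a).1 ha
    obtain ⟨x, hx, hxe⟩ := (hmemC i k a).1 hk
    have hxN : x < N := hHlt x (hWsub i hx)
    have hk0 : k.val = 0 := by
      rcases (show k.val = 0 ∨ k.val = 1 by omega) with h | h
      · exact h
      · rw [h] at hxe; omega
    rw [hk0] at hxe
    have : x = a := by omega
    rwa [this] at hx
  have hWsubA : ∀ i, W i ⊆ (A i).verts := by
    intro i x hx
    exact (hmemA i x).2 ⟨0, (hmemC i 0 x).2 ⟨x, hx, by simp⟩⟩
  -- the distinguished new vertex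
  obtain ⟨w, hw⟩ := hWne i₀
  set v' : ℕ := w + N * 1 with hv'
  have hv'A : v' ∈ (C i₀ 1).verts := (hmemC i₀ 1 v').2 ⟨w, hw, rfl⟩
  have hv'big : N ≤ v' := by omega
  have hv'G : v' ∉ G.verts := fun h => by
    have := hHlt v' (hsub h); omega
  have hv'H : v' ∉ H.verts := fun h => by have := hHlt v' h; omega
  -- the star-join member
  set Hstar : NGraph :=
    { verts := Finset.univ.biUnion (fun i => (A i).verts)
      Adj := fun a b => (∃ i, (A i).Adj a b) ∨ H.Adj a b ∨
        (a = v' ∧ b ∈ G.verts ∧ Gs.Adj v b) ∨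
        (b = v' ∧ a ∈ G.verts ∧ Gs.Adj v a)
      symm := by
        rintro a b (⟨i, h⟩ | h | ⟨h1, h2, h3⟩ | ⟨h1, h2, h3⟩)
        · exact Or.inl ⟨i, (A i).symm _ _ h⟩
        · exact Or.inr (Or.inl (H.symm _ _ h))
        · exact Or.inr (Or.inr (Or.inr ⟨h1, h2, h3⟩))
        · exact Or.inr (Or.inr (Or.inl ⟨h1, h2, h3⟩))
      loopless := by
        rintro a (⟨i, h⟩ | h | ⟨h1, h2, h3⟩ | ⟨h1, h2, h3⟩)
        · exact (A i).loopless a h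
        · exact H.loopless a h
        · exact hv'G (h1 ▸ h2)
        · exact hv'G (h1 ▸ h2)
      mem_of_adj := by
        have hAmem : ∀ i, ∀ a ∈ (A i).verts,
            a ∈ Finset.univ.biUnion (fun i => (A i).verts) :=
          fun i a ha => Finset.mem_biUnion.2 ⟨i, Finset.mem_univ _, ha⟩
        have hHmem : ∀ a ∈ H.verts,
            a ∈ Finset.univ.biUnion (fun i => (A i).verts) := by
          intro a ha
          rw [← hWunion] at ha
          obtain ⟨i, -, hi⟩ := Finset.mem_biUnion.1 ha
          exact hAmem i a (hWsubA i hi)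
        have hv'mem : v' ∈ Finset.univ.biUnion (fun i => (A i).verts) :=
          hAmem i₀ v' ((hmemA i₀ v').2 ⟨1, hv'A⟩)
        rintro a b (⟨i, h⟩ | h | ⟨h1, h2, h3⟩ | ⟨h1, h2, h3⟩)
        · obtain ⟨ha, hb⟩ := (A i).mem_of_adj _ _ h
          exact ⟨hAmem i a ha, hAmem i b hb⟩
        · obtain ⟨ha, hb⟩ := H.mem_of_adj _ _ h
          exact ⟨hHmem a ha, hHmem b hb⟩
        · exact ⟨h1 ▸ hv'mem, hHmem b (hsub h2)⟩
        · exact ⟨hHmem a (hsub h2), h1 ▸ hv'mem⟩ } with hHstar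
  -- basic adjacency characterizations
  have hCadjH : ∀ i k a b, (C i k).Adj a b → a ∈ H.verts → b ∈ H.verts →
      H.Adj a b := by
    intro i k a b hadj ha hb
    obtain ⟨x, y, hxy, hax, hby, -⟩ := hadj
    beta_reduce at hax hby
    have haN : a < N := hHlt a ha
    have hk0 : k.val = 0 := by
      rcases (show k.val = 0 ∨ k.val = 1 by omega) with h | h
      · exact h
      · rw [h] at hax; omega
    rw [hk0] at hax hby
    have hax' : a = x := by omega
    have hby' : b = y := by omega
    rw [hax', hby']
    exact hxy.1
  have hsmalladj : ∀ a b, a ∈ H.verts → b ∈ H.verts →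
      (Hstar.Adj a b ↔ H.Adj a b) := by
    intro a b ha hb
    constructor
    · rintro (⟨i, k, h⟩ | h | ⟨h1, h2, h3⟩ | ⟨h1, h2, h3⟩)
      · exact hCadjH i k a b h ha hb
      · exact h
      · exact absurd (h1 ▸ ha) hv'H
      · exact absurd (h1 ▸ hb) hv'H
    · exact fun h => Or.inr (Or.inl h)
  have hv'adj : ∀ b ∈ G.verts, (Hstar.Adj v' b ↔ Gs.Adj v b) := by
    intro b hb
    constructor
    · rintro (⟨i, k, h⟩ | h | ⟨h1, h2, h3⟩ | ⟨h1, h2, h3⟩)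
      · obtain ⟨x, y, hxy, hax, hby, -⟩ := h
        beta_reduce at hax hby
        have hyW : y ∈ W i := hxy.2.2
        have hxW : x ∈ W i := hxy.2.1
        have hyN : y < N := hHlt y (hWsub i hyW)
        have hbN : b < N := hHlt b (hsub hb)
        have hk0 : k.val = 0 := by
          rcases (show k.val = 0 ∨ k.val = 1 by omega) with h | h
          · exact h
          · rw [h] at hby; omega
        rw [hk0] at hax
        have : v' = x := by omega
        exact absurd (this ▸ hWsub i hxW) hv'H
      · exact absurd (H.mem_of_adj _ _ h).1 hv'H
      · exact h3
      · exact absurd (h1 ▸ hb) hv'G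
    · exact fun h => Or.inr (Or.inr (Or.inl ⟨rfl, hb, h⟩))
  -- Hstar belongs to the star join
  have hstarmem : Hstar ∈ StarJoin A := by
    refine ⟨rfl, ?_⟩
    intro i a ha b hb
    constructor
    · rintro (⟨i', h⟩ | h | ⟨h1, h2, h3⟩ | ⟨h1, h2, h3⟩)
      · rcases eq_or_ne i' i with rfl | hne
        · exact h
        · obtain ⟨ha', -⟩ := (A i').mem_of_adj _ _ h
          exact absurd ha (Finset.disjoint_left.1 (hAdisj i' i hne) ha')
      · obtain ⟨ha', hb'⟩ := H.mem_of_adj _ _ h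
        have haW : a ∈ W i := hsmallA i a ha (hHlt a ha')
        have hbW : b ∈ W i := hsmallA i b hb (hHlt b hb')
        exact ⟨0, a, b, ⟨h, haW, hbW⟩, by simp, by simp, H.adj_ne h⟩
      · have hi : i = i₀ := by
          by_contra hne2
          have hmem : v' ∈ (A i₀).verts := (hmemA i₀ v').2 ⟨1, hv'A⟩
          exact Finset.disjoint_left.1 (hAdisj i i₀ hne2) (h1 ▸ ha) hmem
        have hbN : b < N := hHlt b (hsub h2)
        have hbW : b ∈ W i₀ := hsmallA i₀ b (hi ▸ hb) hbN
        exact absurd hbW (hcon' b h2)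
      · have hi : i = i₀ := by
          by_contra hne2
          have hmem : v' ∈ (A i₀).verts := (hmemA i₀ v').2 ⟨1, hv'A⟩
          exact Finset.disjoint_left.1 (hAdisj i i₀ hne2) (h1 ▸ hb) hmem
        have haN : a < N := hHlt a (hsub h2)
        have haW : a ∈ W i₀ := hsmallA i₀ a (hi ▸ ha) haN
        exact absurd haW (hcon' a h2)
    · exact fun h => Or.inl ⟨i, h⟩
  have hHstarP : Hstar ∈ P :=
    hWmain 2 (by norm_num) A hAcopies hAdisj Hstar hstarmem
  -- Gs is an induced subgraph of Hstar
  have hHsubStar : H.verts ⊆ Hstar.verts := by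
    intro a ha
    rw [← hWunion] at ha
    obtain ⟨i, -, hi⟩ := Finset.mem_biUnion.1 ha
    exact Finset.mem_biUnion.2 ⟨i, Finset.mem_univ _, hWsubA i hi⟩
  have hUsub : insert v' G.verts ⊆ Hstar.verts := by
    intro a ha
    rcases Finset.mem_insert.1 ha with ha' | ha'
    · rw [ha']
      exact Finset.mem_biUnion.2 ⟨i₀, Finset.mem_univ _, (hmemA i₀ v').2 ⟨1, hv'A⟩⟩
    · exact hHsubStar (hsub ha')
  have hLe : NGraph.Le Gs Hstar := by
    refine ⟨insert v' G.verts, hUsub, fun a => if a = v then v' else a, ?_, ?_⟩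
    · have hverts : ((Hstar.induce (insert v' G.verts)).verts : Set ℕ) =
          ((insert v' G.verts : Finset ℕ) : Set ℕ) := by
        rw [induce_verts_of_subset hUsub]
      rw [hverts, hGsverts]
      refine ⟨?_, ?_, ?_⟩
      · intro a ha
        simp only [Finset.coe_insert, Set.mem_insert_iff, Finset.mem_coe] at ha ⊢
        rcases ha with ha | ha
        · rw [if_pos ha]; exact Or.inl rfl
        · rw [if_neg (fun e : _ = v => hv (e ▸ ha))]; exact Or.inr ha
      · intro a ha b hb e
        simp only [Finset.coe_insert, Set.mem_insert_iff, Finset.mem_coe] at ha hb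
        beta_reduce at e
        rcases ha with ha | ha <;> rcases hb with hb | hb
        · rw [ha, hb]
        · rw [if_pos ha, if_neg (fun x : _ = v => hv (x ▸ hb))] at e
          rw [← e] at hb
          exact absurd hb hv'G
        · rw [if_neg (fun x : _ = v => hv (x ▸ ha)), if_pos hb] at e
          rw [e] at ha
          exact absurd ha hv'G
        · rwa [if_neg (fun x : _ = v => hv (x ▸ ha)), if_neg (fun x : _ = v => hv (x ▸ hb))] at e
      · intro c hc
        simp only [Finset.coe_insert, Set.mem_insert_iff, Finset.mem_coe,
          Set.mem_image] at hc ⊢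
        rcases hc with hc | hc
        · exact ⟨v, Or.inl rfl, by rw [if_pos rfl, hc]⟩
        · exact ⟨c, Or.inr hc, by rw [if_neg (fun e : _ = v => hv (e ▸ hc))]⟩
    · intro a ha b hb
      rw [hGsverts] at ha hb
      beta_reduce
      rcases Finset.mem_insert.1 ha with ha' | ha' <;>
        rcases Finset.mem_insert.1 hb with hb' | hb'
      · rw [if_pos ha', if_pos hb']
        constructor
        · intro h; rw [ha', hb'] at h; exact absurd h (Gs.loopless v)
        · intro h; exact absurd h.1 (Hstar.loopless v')
      · rw [if_pos ha', if_neg (fun e : _ = v => hv (e ▸ hb'))]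
        constructor
        · intro h
          refine ⟨(hv'adj b hb').2 ?_, Finset.mem_insert_self _ _,
            Finset.mem_insert_of_mem hb'⟩
          rw [← ha']; exact h
        · intro h
          rw [ha']; exact (hv'adj b hb').1 h.1
      · rw [if_neg (fun e : _ = v => hv (e ▸ ha')), if_pos hb']
        constructor
        · intro h
          refine ⟨Hstar.symm _ _ ((hv'adj a ha').2 (Gs.symm _ _ ?_)),
            Finset.mem_insert_of_mem ha', Finset.mem_insert_self _ _⟩
          rw [← hb']; exact h
        · intro h
          rw [hb']; exact Gs.symm _ _ ((hv'adj a ha').1 (Hstar.symm _ _ h.1))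
      · rw [if_neg (fun e : _ = v => hv (e ▸ ha')), if_neg (fun e : _ = v => hv (e ▸ hb'))]
        rw [hGsadj a ha' b hb']
        constructor
        · intro h
          exact ⟨(hsmalladj a b (hsub ha') (hsub hb')).2 ((hind a ha' b hb').2 h),
            Finset.mem_insert_of_mem ha', Finset.mem_insert_of_mem hb'⟩
        · intro h
          exact (hind a ha' b hb').1 ((hsmalladj a b (hsub ha') (hsub hb')).1 h.1)
  exact hGsN (hP.2.1 Hstar Gs hHstarP hLe)

end Trace
section TraceDecomp

open Finset

lemma block_eq {N x y c c' : ℕ} (hx : x < N) (hy : y < N)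
    (h : x + N * (1 + c) = y + N * (1 + c')) : c = c' ∧ x = y := by
  have key : ∀ u u' : ℕ, u < u' → N * (1 + u) + N ≤ N * (1 + u') := by
    intro u u' huu
    have h2 : 1 + u + 1 ≤ 1 + u' := by omega
    calc N * (1 + u) + N = N * (1 + u + 1) := by ring
    _ ≤ N * (1 + u') := Nat.mul_le_mul_left _ h2
  have hcc : c = c' := by
    rcases lt_trichotomy c c' with hlt | heq | hgt
    · have := key c c' hlt; omega
    · exact heq
    · have := key c' c hgt; omega
  subst hcc
  exact ⟨rfl, by omega⟩

lemma code_inj {kk a b c d : ℕ} (hb : b < kk) (hd : d < kk)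
    (h : kk * a + b = kk * c + d) : a = c ∧ b = d := by
  have h1 : (kk * a + b) % kk = b % kk := Nat.mul_add_mod kk a b
  have h2 : (kk * c + d) % kk = d % kk := Nat.mul_add_mod kk c d
  have hbd : b = d := by
    rw [Nat.mod_eq_of_lt hb] at h1
    rw [Nat.mod_eq_of_lt hd] at h2
    rw [h, h2] at h1
    exact h1.symm
  subst hbd
  have hac : kk * a = kk * c := by omega
  exact ⟨Nat.eq_of_mul_eq_mul_left (by omega) hac, rfl⟩

lemma trace_decomp (P : Set NGraph) (hP : IsAIH P)
    (G H : NGraph)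
    (hsub : G.verts ⊆ H.verts)
    (hind : ∀ a ∈ G.verts, ∀ b ∈ G.verts, (H.Adj a b ↔ G.Adj a b))
    {n : ℕ} (W : Fin n → Finset ℕ) (hW : IsDecomp P H W)
    (hne : ∀ i, (W i ∩ G.verts).Nonempty) :
    IsDecomp P G (fun i => W i ∩ G.verts) := by
  obtain ⟨hWne, hWdisj, hWunion, hWmain⟩ := hW
  have hWsub : ∀ i, W i ⊆ H.verts := fun i x hx =>
    hWunion ▸ Finset.mem_biUnion.2 ⟨i, Finset.mem_univ _, hx⟩
  have hW'subG : ∀ i, W i ∩ G.verts ⊆ G.verts := fun i => Finset.inter_subset_right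
  have hbaseG : ∀ i, (G.induce (W i ∩ G.verts)).verts = W i ∩ G.verts :=
    fun i => induce_verts_of_subset (hW'subG i)
  have hbaseH : ∀ i, (H.induce (W i)).verts = W i :=
    fun i => induce_verts_of_subset (hWsub i)
  refine ⟨hne, ?_, ?_, ?_⟩
  · intro i j hij
    exact (hWdisj i j hij).mono Finset.inter_subset_left Finset.inter_subset_left
  · apply Finset.Subset.antisymm
    · intro a ha
      obtain ⟨i, -, hi⟩ := Finset.mem_biUnion.1 ha
      exact (Finset.mem_inter.1 hi).2
    · intro a ha
      have haH : a ∈ H.verts := hsub ha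
      rw [← hWunion] at haH
      obtain ⟨i, -, hi⟩ := Finset.mem_biUnion.1 haH
      exact Finset.mem_biUnion.2 ⟨i, Finset.mem_univ _,
        Finset.mem_inter.2 ⟨hi, ha⟩⟩
  · intro kk hkk A hA hAdisj H' hH'
    choose C hCiso hCdu using hA
    have hiso : ∀ i j, ∃ ψ, (G.induce (W i ∩ G.verts)).IsoVia (C i j) ψ := by
      intro i j
      obtain ⟨φ, hφ⟩ := hCiso i j
      exact hφ.isoSymm
    choose ψ hψ using hiso
    have hbij : ∀ i k, Set.BijOn (ψ i k) ((W i ∩ G.verts : Finset ℕ) : Set ℕ)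
        ((C i k).verts : Set ℕ) := by
      intro i k
      have := (hψ i k).1
      rwa [hbaseG i] at this
    set N := bnd (H.verts ∪ H'.verts) with hNdef
    have hHlt : ∀ a ∈ H.verts, a < N := fun a ha =>
      lt_bnd (Finset.mem_union_left _ ha)
    have hH'lt : ∀ a ∈ H'.verts, a < N := fun a ha =>
      lt_bnd (Finset.mem_union_right _ ha)
    have hH'verts : H'.verts = Finset.univ.biUnion fun i => (A i).verts := hH'.1
    have hcopysub : ∀ i k, (C i k).verts ⊆ (A i).verts := by
      intro i k x hx
      rw [(hCdu i).2.1]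
      exact Finset.mem_biUnion.2 ⟨k, Finset.mem_univ _, hx⟩
    have hAsubH' : ∀ i, (A i).verts ⊆ H'.verts := by
      intro i x hx
      rw [hH'verts]
      exact Finset.mem_biUnion.2 ⟨i, Finset.mem_univ _, hx⟩
    have hψmem : ∀ i k, ∀ x ∈ W i ∩ G.verts, ψ i k x ∈ (C i k).verts := by
      intro i k x hx
      exact_mod_cast (hbij i k).mapsTo (by exact_mod_cast hx)
    have hψlt : ∀ i k, ∀ x ∈ W i ∩ G.verts, ψ i k x < N :=
      fun i k x hx => hH'lt _ (hAsubH' i (hcopysub i k (hψmem i k x hx)))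
    -- the extension maps
    set ψm : Fin n → Fin kk → ℕ → ℕ := fun i k x =>
      if x ∈ G.verts then ψ i k x else x + N * (1 + (kk * i.val + k.val)) with hψm
    have hoffbig : ∀ (i : Fin n) (k : Fin kk) (x : ℕ),
        N ≤ x + N * (1 + (kk * i.val + k.val)) := by
      intro i k x
      have h1 : N * 1 ≤ N * (1 + (kk * i.val + k.val)) :=
        Nat.mul_le_mul_left _ (by omega)
      omega
    have hmemW' : ∀ (i : Fin n) (x : ℕ), x ∈ W i → x ∈ G.verts →
        x ∈ W i ∩ G.verts := fun i x h1 h2 => Finset.mem_inter.2 ⟨h1, h2⟩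
    have hinj : ∀ i k, Set.InjOn (ψm i k) ((W i : Finset ℕ) : Set ℕ) := by
      intro i k x hx y hy e
      simp only [Finset.mem_coe] at hx hy
      simp only [hψm] at e
      by_cases hxG : x ∈ G.verts <;> by_cases hyG : y ∈ G.verts
      · rw [if_pos hxG, if_pos hyG] at e
        exact (hbij i k).injOn (by exact_mod_cast hmemW' i x hx hxG)
          (by exact_mod_cast hmemW' i y hy hyG) e
      · rw [if_pos hxG, if_neg hyG] at e
        have h1 := hψlt i k x (hmemW' i x hx hxG)
        have h2 := hoffbig i k y
        omega
      · rw [if_neg hxG, if_pos hyG] at e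
        have h1 := hψlt i k y (hmemW' i y hy hyG)
        have h2 := hoffbig i k x
        omega
      · rw [if_neg hxG, if_neg hyG] at e
        omega
    -- the extended copies
    set C' : Fin n → Fin kk → NGraph :=
      fun i k => (H.induce (W i)).mapGraph (ψm i k) with hC'
    have hmemC' : ∀ i k a, a ∈ (C' i k).verts ↔ ∃ x ∈ W i, ψm i k x = a := by
      intro i k a
      simp only [hC', NGraph.mapGraph, hbaseH i, Finset.mem_image]
    have hC'iso : ∀ i k, (H.induce (W i)).IsoVia (C' i k) (ψm i k) := by
      intro i k
      apply NGraph.mapGraph_isoVia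
      rw [hbaseH i]
      exact hinj i k
    -- membership dichotomy for C'
    have hdich : ∀ i k a, a ∈ (C' i k).verts →
        (a ∈ (C i k).verts ∨ ∃ x ∈ W i, x ∉ G.verts ∧
          a = x + N * (1 + (kk * i.val + k.val))) := by
      intro i k a ha
      obtain ⟨x, hx, hxe⟩ := (hmemC' i k a).1 ha
      by_cases hxG : x ∈ G.verts
      · left
        rw [← hxe]
        simp only [hψm, if_pos hxG]
        exact hψmem i k x (hmemW' i x hx hxG)
      · right
        refine ⟨x, hx, hxG, ?_⟩
        rw [← hxe]
        simp only [hψm, if_neg hxG]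
    have hCsubC' : ∀ i k, (C i k).verts ⊆ (C' i k).verts := by
      intro i k a ha
      have : (a : ℕ) ∈ (ψ i k) '' ((W i ∩ G.verts : Finset ℕ) : Set ℕ) :=
        (hbij i k).surjOn (by exact_mod_cast ha)
      obtain ⟨x, hx, hxe⟩ := this
      simp only [Finset.mem_coe, Finset.mem_inter] at hx
      refine (hmemC' i k a).2 ⟨x, hx.1, ?_⟩
      simp only [hψm, if_pos hx.2]
      exact hxe
    have hClt : ∀ i k, ∀ a ∈ (C i k).verts, a < N :=
      fun i k a ha => hH'lt a (hAsubH' i (hcopysub i k ha))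
    -- master disjointness of the extended copies
    have hC'disj : ∀ i k i' k', (i ≠ i' ∨ k ≠ k') →
        Disjoint (C' i k).verts (C' i' k').verts := by
      intro i k i' k' hnei
      rw [Finset.disjoint_left]
      intro a ha ha'
      rcases hdich i k a ha with hold | ⟨x, hx, hxG, hxe⟩ <;>
        rcases hdich i' k' a ha' with hold' | ⟨y, hy, hyG, hye⟩
      · rcases eq_or_ne i i' with rfl | hii
        · have hkk' : k ≠ k' := by
            rcases hnei with h | h
            · exact absurd rfl h
            · exact h
          exact Finset.disjoint_left.1 ((hCdu i).1 k k' hkk') hold hold'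
        · exact Finset.disjoint_left.1 (hAdisj i i' hii)
            (hcopysub i k hold) (hcopysub i' k' hold')
      · have h1 := hClt i k a hold
        have h2 := hoffbig i' k' y
        omega
      · have h1 := hClt i' k' a hold'
        have h2 := hoffbig i k x
        omega
      · have hxN : x < N := hHlt x (hWsub i hx)
        have hyN : y < N := hHlt y (hWsub i' hy)
        obtain ⟨hcc, hxy⟩ := block_eq hxN hyN (by omega :
          x + N * (1 + (kk * i.val + k.val)) = y + N * (1 + (kk * i'.val + k'.val)))
        obtain ⟨hii, hkk'⟩ := code_inj k.isLt k'.isLt hcc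
        rcases hnei with h | h
        · exact h (Fin.ext hii)
        · exact h (Fin.ext hkk')
    -- the extended disjoint unions
    set A' : Fin n → NGraph := fun i => unionFam (C' i) with hA'
    have hmemA' : ∀ i a, a ∈ (A' i).verts ↔ ∃ k, a ∈ (C' i k).verts := by
      intro i a; simp [hA', unionFam]
    have hA'copies : ∀ i, A' i ∈ kCopies kk (H.induce (W i)) :=
      fun i => unionFam_mem_kCopies (fun k => (hC'iso i k).isoSymm)
        (fun k k' hkk' => hC'disj i k i k' (Or.inr hkk'))
    have hA'disj : ∀ i j, i ≠ j → Disjoint (A' i).verts (A' j).verts := by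
      intro i j hij
      rw [Finset.disjoint_left]
      intro a ha ha'
      obtain ⟨k, hk⟩ := (hmemA' i a).1 ha
      obtain ⟨k', hk'⟩ := (hmemA' j a).1 ha'
      exact Finset.disjoint_left.1 (hC'disj i k j k' (Or.inl hij)) hk hk'
    have hAsubA' : ∀ i, (A i).verts ⊆ (A' i).verts := by
      intro i a ha
      rw [(hCdu i).2.1] at ha
      obtain ⟨k, -, hk⟩ := Finset.mem_biUnion.1 ha
      exact (hmemA' i a).2 ⟨k, hCsubC' i k hk⟩
    -- adjacency transfer: old edges
    have hadjW' : ∀ i k x y, x ∈ W i ∩ G.verts → y ∈ W i ∩ G.verts →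
        ((G.induce (W i ∩ G.verts)).Adj x y ↔ (C i k).Adj (ψ i k x) (ψ i k y)) := by
      intro i k x y hx hy
      exact (hψ i k).2 x (by rw [hbaseG i]; exact hx) y (by rw [hbaseG i]; exact hy)
    have gOld : ∀ i k a b, (C i k).Adj a b → (C' i k).Adj a b := by
      intro i k a b hab
      obtain ⟨ha, hb⟩ := (C i k).mem_of_adj _ _ hab
      obtain ⟨x, hx, hxe⟩ := (hbij i k).surjOn (by exact_mod_cast ha :
        (a : ℕ) ∈ ((C i k).verts : Set ℕ))
      obtain ⟨y, hy, hye⟩ := (hbij i k).surjOn (by exact_mod_cast hb :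
        (b : ℕ) ∈ ((C i k).verts : Set ℕ))
      simp only [Finset.mem_coe] at hx hy
      have hneq : a ≠ b := NGraph.adj_ne hab
      rw [← hxe, ← hye] at hab
      have hGadj : (G.induce (W i ∩ G.verts)).Adj x y := (hadjW' i k x y hx hy).2 hab
      obtain ⟨hGxy, hxW', hyW'⟩ := hGadj
      obtain ⟨hxW, hxG⟩ := Finset.mem_inter.1 hx
      obtain ⟨hyW, hyG⟩ := Finset.mem_inter.1 hy
      have hHadj : (H.induce (W i)).Adj x y := ⟨(hind x hxG y hyG).2 hGxy, hxW, hyW⟩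
      refine ⟨x, y, hHadj, ?_, ?_, ?_⟩
      · simp only [hψm, if_pos hxG]; exact hxe.symm
      · simp only [hψm, if_pos hyG]; exact hye.symm
      · exact hneq
    have gOld' : ∀ i k a b, (C' i k).Adj a b → a < N → b < N → (C i k).Adj a b := by
      intro i k a b hab haN hbN
      obtain ⟨x, y, hxy, hax, hby, -⟩ := hab
      obtain ⟨hHxy, hxW, hyW⟩ := hxy
      have hxG : x ∈ G.verts := by
        by_contra hxG
        rw [hψm] at hax
        simp only [if_neg hxG] at hax
        have := hoffbig i k x
        omega
      have hyG : y ∈ G.verts := by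
        by_contra hyG
        rw [hψm] at hby
        simp only [if_neg hyG] at hby
        have := hoffbig i k y
        omega
      have hax' : a = ψ i k x := by
        rw [hax]; simp only [hψm, if_pos hxG]
      have hby' : b = ψ i k y := by
        rw [hby]; simp only [hψm, if_pos hyG]
      have hGadj : (G.induce (W i ∩ G.verts)).Adj x y :=
        ⟨(hind x hxG y hyG).1 hHxy, hmemW' i x hxW hxG, hmemW' i y hyW hyG⟩
      rw [hax', hby']
      exact (hadjW' i k x y (hmemW' i x hxW hxG) (hmemW' i y hyW hyG)).1 hGadj
    -- small members of A' i are in A i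
    have hsmallA' : ∀ i a, a ∈ (A' i).verts → a < N → a ∈ (A i).verts := by
      intro i a ha haN
      obtain ⟨k, hk⟩ := (hmemA' i a).1 ha
      rcases hdich i k a hk with hold | ⟨x, hx, hxG, hxe⟩
      · exact hcopysub i k hold
      · have := hoffbig i k x
        omega
    -- the extended star-join member
    set Hstar : NGraph :=
      { verts := Finset.univ.biUnion fun i => (A' i).verts
        Adj := fun a b => H'.Adj a b ∨ ∃ i k, (C' i k).Adj a b
        symm := by
          rintro a b (h | ⟨i, k, h⟩)
          · exact Or.inl (H'.symm _ _ h)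
          · exact Or.inr ⟨i, k, (C' i k).symm _ _ h⟩
        loopless := by
          rintro a (h | ⟨i, k, h⟩)
          · exact H'.loopless a h
          · exact (C' i k).loopless a h
        mem_of_adj := by
          have hmem : ∀ i, ∀ a ∈ (A' i).verts,
              a ∈ Finset.univ.biUnion fun i => (A' i).verts :=
            fun i a ha => Finset.mem_biUnion.2 ⟨i, Finset.mem_univ _, ha⟩
          have hmemH' : ∀ a ∈ H'.verts,
              a ∈ Finset.univ.biUnion fun i => (A' i).verts := by
            intro a ha
            rw [hH'verts] at ha
            obtain ⟨i, -, hi⟩ := Finset.mem_biUnion.1 ha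
            exact hmem i a (hAsubA' i hi)
          rintro a b (h | ⟨i, k, h⟩)
          · obtain ⟨ha, hb⟩ := H'.mem_of_adj _ _ h
            exact ⟨hmemH' a ha, hmemH' b hb⟩
          · obtain ⟨ha, hb⟩ := (C' i k).mem_of_adj _ _ h
            exact ⟨hmem i a ((hmemA' i a).2 ⟨k, ha⟩),
              hmem i b ((hmemA' i b).2 ⟨k, hb⟩)⟩ } with hHstar
    have hstarmem : Hstar ∈ StarJoin A' := by
      refine ⟨rfl, ?_⟩
      intro i a ha b hb
      constructor
      · rintro (h | ⟨i', k', h⟩)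
        · obtain ⟨haH', hbH'⟩ := H'.mem_of_adj _ _ h
          have haA : a ∈ (A i).verts := hsmallA' i a ha (hH'lt a haH')
          have hbA : b ∈ (A i).verts := hsmallA' i b hb (hH'lt b hbH')
          have hAadj : (A i).Adj a b := (hH'.2 i a haA b hbA).1 h
          obtain ⟨k, hk⟩ := ((hCdu i).2.2 a b).1 hAadj
          exact ⟨k, gOld i k a b hk⟩
        · rcases eq_or_ne i' i with rfl | hii
          · exact ⟨k', h⟩
          · obtain ⟨ha', -⟩ := (C' i' k').mem_of_adj _ _ h
            have : a ∈ (A' i').verts := (hmemA' i' a).2 ⟨k', ha'⟩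
            exact absurd ha (Finset.disjoint_left.1 (hA'disj i' i hii) this)
      · rintro ⟨k, hk⟩
        exact Or.inr ⟨i, k, hk⟩
    have hHstarP : Hstar ∈ P :=
      hWmain kk hkk A' hA'copies hA'disj Hstar hstarmem
    -- H' is an induced subgraph of Hstar
    have hUsub : H'.verts ⊆ Hstar.verts := by
      intro a ha
      rw [hH'verts] at ha
      obtain ⟨i, -, hi⟩ := Finset.mem_biUnion.1 ha
      exact Finset.mem_biUnion.2 ⟨i, Finset.mem_univ _, hAsubA' i hi⟩
    have hLe : NGraph.Le H' Hstar := by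
      refine ⟨H'.verts, hUsub, fun a => a, ?_, ?_⟩
      · have hverts : (((Hstar.induce H'.verts).verts : Finset ℕ) : Set ℕ) =
            ((H'.verts : Finset ℕ) : Set ℕ) := by
          rw [induce_verts_of_subset hUsub]
        rw [hverts]
        exact Set.bijOn_id _
      · intro a ha b hb
        beta_reduce
        constructor
        · intro h
          exact ⟨Or.inl h, ha, hb⟩
        · rintro ⟨h | ⟨i, k, h⟩, -, -⟩
          · exact h
          · have hCadj : (C i k).Adj a b :=
              gOld' i k a b h (hH'lt a ha) (hH'lt b hb)
            obtain ⟨haC, hbC⟩ := (C i k).mem_of_adj _ _ hCadj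
            have hAadj : (A i).Adj a b := ((hCdu i).2.2 a b).2 ⟨k, hCadj⟩
            exact (hH'.2 i a (hcopysub i k haC) b (hcopysub i k hbC)).2 hAadj
    exact hP.2.1 Hstar H' hHstarP hLe

end TraceDecomp

-- STATEMENT 13
theorem statement13 (P : Set NGraph) (hP : IsAIH P) (hne : P ≠ Set.univ)
    (G H : NGraph)
    (hGstrict : Strict P G) (hGuniq : UniquelyDecomposable P G)
    (hGdec : decP P G = decOf P)
    (hHstrict : Strict P H) (hHuniq : UniquelyDecomposable P H)
    (hHdec : decP P H = decOf P)
    (hsub : G.verts ⊆ H.verts)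
    (hind : ∀ a ∈ G.verts, ∀ b ∈ G.verts, (H.Adj a b ↔ G.Adj a b))
    (V : Fin (decOf P) → Finset ℕ) (hV : IsDecomp P G V)
    (W : Fin (decOf P) → Finset ℕ) (hW : IsDecomp P H W) :
    ∃ σ : Equiv.Perm (Fin (decOf P)), ∀ i, W (σ i) ∩ G.verts = V i := by
  classical
  have hne2 : ∀ i, (W i ∩ G.verts).Nonempty :=
    fun i => trace_nonempty P hP G H hGstrict hsub hind W hW i
  have htr : IsDecomp P G (fun i => W i ∩ G.verts) :=
    trace_decomp P hP G H hsub hind W hW hne2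
  obtain ⟨-, huniq⟩ := hGuniq
  rw [hGdec] at huniq
  obtain ⟨σ, hσ⟩ := huniq V (fun i => W i ∩ G.verts) hV htr
  refine ⟨σ⁻¹, fun i => ?_⟩
  have h1 := hσ (σ⁻¹ i)
  rw [h1, Equiv.Perm.coe_inv, Equiv.apply_symm_apply]
end
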